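/- arXiv:2207.02546 — 4 statements merged into one kernel-verified Lean document; each statement's English description precedes it below -/
import Mathlib

section
/- Let $\{d_i\}_{i=1}^n$ be a sequence of random variables adapted to an increasing sequence of $\sigma$-fields $\{\mathcal{F}_i\}$ such that each $d_i$ is conditionally symmetric given $\mathcal{F}_{i-1}$ (i.e., the conditional law of $d_i$ given $\mathcal{F}_{i-1}$ equals that of $-d_i$). Then for every $\lambda \in \mathbb{R}$, the process $M_n = \exp(\lambda \sum_{i=1}^n d_i - \frac{\lambda^2}{2} \sum_{i=1}^n d_i^2)$, $n \geq 1$, is a supermartingale with $\mathrm{E}[M_n] \leq 1$. -/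
open MeasureTheory Real Finset

/-- If `{dseq i}` is adapted and each `dseq (i+1)` is conditionally symmetric given `ℱ i`,
then `exp (λ ∑_{i=1}^n dseq i - λ²/2 ∑_{i=1}^n (dseq i)²)` is a supermartingale with
expectation at most 1. -/
theorem cond_symmetric_exp_supermartingale
    {Ω : Type*} {m0 : MeasurableSpace Ω} (μ : Measure Ω) [IsProbabilityMeasure μ]
    (ℱ : Filtration ℕ m0) (dseq : ℕ → Ω → ℝ)
    (hadp : Adapted ℱ dseq)
    (hsym : ∀ i : ℕ, ∀ g : ℝ → ℝ, Measurable g → (∀ x, |g x| ≤ 1) →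
      μ[(fun ω => g (dseq (i + 1) ω)) | ℱ i]
        =ᵐ[μ] μ[(fun ω => g (-(dseq (i + 1) ω))) | ℱ i])
    (lam : ℝ) :
    Supermartingale
      (fun n ω => Real.exp (lam * ∑ i ∈ Finset.range n, dseq (i + 1) ω
        - lam ^ 2 / 2 * ∑ i ∈ Finset.range n, (dseq (i + 1) ω) ^ 2)) ℱ μ
    ∧ ∀ n : ℕ,
      ∫ ω, Real.exp (lam * ∑ i ∈ Finset.range n, dseq (i + 1) ω
        - lam ^ 2 / 2 * ∑ i ∈ Finset.range n, (dseq (i + 1) ω) ^ 2) ∂μ ≤ 1 := by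
  classical
  set M : ℕ → Ω → ℝ := fun n ω => Real.exp (lam * ∑ i ∈ Finset.range n, dseq (i + 1) ω
        - lam ^ 2 / 2 * ∑ i ∈ Finset.range n, (dseq (i + 1) ω) ^ 2) with hM
  set g : ℝ → ℝ := fun x => Real.exp (lam * x - lam ^ 2 / 2 * x ^ 2) with hgdef
  have hg_meas : Measurable g := by fun_prop
  have hexp_bound : ∀ x : ℝ, lam * x - lam ^ 2 / 2 * x ^ 2 ≤ 1 / 2 := fun x => by
    nlinarith [sq_nonneg (lam * x - 1)]
  have hg_bound : ∀ x, g x ≤ Real.exp (1 / 2) := fun x =>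
    Real.exp_le_exp.2 (hexp_bound x)
  have hg_pos : ∀ x, 0 < g x := fun x => Real.exp_pos _
  -- measurable w.r.t. ℱ n
  have hmeasM : ∀ n, StronglyMeasurable[ℱ n] (M n) := by
    intro n
    have hsum : ∀ i ∈ Finset.range n, Measurable[ℱ n] (fun ω => dseq (i + 1) ω) := by
      intro i hi
      exact (hadp (i + 1)).mono (ℱ.mono (Finset.mem_range.1 hi)) le_rfl
    have h1 : Measurable[ℱ n] (fun ω => ∑ i ∈ Finset.range n, dseq (i + 1) ω) :=
      Finset.measurable_sum _ hsum
    have h2 : Measurable[ℱ n] (fun ω => ∑ i ∈ Finset.range n, (dseq (i + 1) ω) ^ 2) :=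
      Finset.measurable_sum _ (fun i hi => ((hsum i hi).pow_const 2))
    exact (Real.measurable_exp.comp ((h1.const_mul lam).sub (h2.const_mul _))).stronglyMeasurable
  have hadpM : StronglyAdapted ℱ M := hmeasM
  -- pointwise bound on M n
  have hMbound : ∀ n ω, ‖M n ω‖ ≤ Real.exp (n * (1 / 2)) := by
    intro n ω
    rw [Real.norm_eq_abs, abs_of_pos (Real.exp_pos _), Real.exp_le_exp]
    have : lam * ∑ i ∈ Finset.range n, dseq (i + 1) ω
        - lam ^ 2 / 2 * ∑ i ∈ Finset.range n, (dseq (i + 1) ω) ^ 2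
        = ∑ i ∈ Finset.range n, (lam * dseq (i + 1) ω - lam ^ 2 / 2 * (dseq (i + 1) ω) ^ 2) := by
      rw [Finset.sum_sub_distrib, Finset.mul_sum, Finset.mul_sum]
    rw [this]
    calc ∑ i ∈ Finset.range n, (lam * dseq (i + 1) ω - lam ^ 2 / 2 * (dseq (i + 1) ω) ^ 2)
        ≤ ∑ _i ∈ Finset.range n, (1 / 2 : ℝ) :=
          Finset.sum_le_sum fun i _ => hexp_bound _
      _ = n * (1 / 2) := by simp [Finset.sum_const, mul_comm]
  have hMpos : ∀ n ω, 0 < M n ω := fun n ω => Real.exp_pos _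
  -- integrability
  have hintM : ∀ n, Integrable (M n) μ := by
    intro n
    exact (integrable_const (Real.exp (n * (1 / 2)))).mono'
      ((hmeasM n).mono (ℱ.le n)).aestronglyMeasurable (ae_of_all _ (hMbound n))
  -- integrability of g ∘ dseq (n+1)
  have hintg : ∀ n, Integrable (fun ω => g (dseq (n + 1) ω)) μ := by
    intro n
    refine (integrable_const (Real.exp (1 / 2))).mono'
      (hg_meas.comp ((hadp (n + 1)).mono (ℱ.le _) le_rfl)).aestronglyMeasurable
      (ae_of_all _ fun ω => ?_)
    rw [Real.norm_eq_abs, abs_of_pos (hg_pos _)]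
    exact hg_bound _
  -- key claim: conditional expectation of g ∘ d ≤ 1
  have hkey : ∀ n, μ[(fun ω => g (dseq (n + 1) ω)) | ℱ n] ≤ᵐ[μ] fun _ => (1 : ℝ) := by
    intro n
    set g₀ : ℝ → ℝ := fun x => Real.exp (-(1 / 2) : ℝ) * g x with hg₀def
    have hg₀_meas : Measurable g₀ := hg_meas.const_mul _
    have hg₀_bound : ∀ x, |g₀ x| ≤ 1 := by
      intro x
      rw [abs_of_pos (by positivity)]
      calc Real.exp (-(1 / 2)) * g x ≤ Real.exp (-(1 / 2)) * Real.exp (1 / 2) :=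
            mul_le_mul_of_nonneg_left (hg_bound x) (Real.exp_pos _).le
        _ = 1 := by rw [← Real.exp_add]; norm_num
    have hsymn := hsym n g₀ hg₀_meas hg₀_bound
    have hint1 : Integrable (fun ω => g₀ (dseq (n + 1) ω)) μ := (hintg n).const_mul _
    have hint2 : Integrable (fun ω => g₀ (-(dseq (n + 1) ω))) μ := by
      refine (integrable_const (1 : ℝ)).mono'
        ((hg₀_meas.comp ((hadp (n + 1)).mono (ℱ.le _) le_rfl).neg)).aestronglyMeasurable
        (ae_of_all _ fun ω => ?_)
      rw [Real.norm_eq_abs]; exact hg₀_bound _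
    -- average
    have havg : μ[(fun ω => g₀ (dseq (n + 1) ω)) | ℱ n]
        =ᵐ[μ] μ[(fun ω => (g₀ (dseq (n + 1) ω) + g₀ (-(dseq (n + 1) ω))) / 2) | ℱ n] := by
      have hadd := condExp_add (μ := μ) (m := ℱ n) hint1 hint2
      have hsm := condExp_smul (μ := μ) (m := ℱ n) ((2 : ℝ)⁻¹)
        (fun ω => g₀ (dseq (n + 1) ω) + g₀ (-(dseq (n + 1) ω)))
      have : (fun ω => (g₀ (dseq (n + 1) ω) + g₀ (-(dseq (n + 1) ω))) / 2)
          = (2 : ℝ)⁻¹ • fun ω => g₀ (dseq (n + 1) ω) + g₀ (-(dseq (n + 1) ω)) := by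
        funext ω; simp [div_eq_inv_mul]
      rw [this]
      filter_upwards [hadd, hsm, hsymn] with ω h1 h2 h3
      rw [h2]
      simp only [Pi.smul_apply, Pi.add_apply] at h1 ⊢
      rw [show (fun ω => g₀ (dseq (n + 1) ω) + g₀ (-(dseq (n + 1) ω)))
          = (fun ω => g₀ (dseq (n + 1) ω)) + fun ω => g₀ (-(dseq (n + 1) ω)) from rfl, h1, ← h3,
        smul_eq_mul]
      ring
    have hptw : ∀ x : ℝ, (g₀ x + g₀ (-x)) / 2 ≤ Real.exp (-(1 / 2)) := by
      intro x
      have hcosh := Real.cosh_le_exp_half_sq (lam * x)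
      rw [Real.cosh_eq] at hcosh
      have hx : g₀ x + g₀ (-x)
          = Real.exp (-(1 / 2)) * Real.exp (-(lam ^ 2 / 2 * x ^ 2))
            * (Real.exp (lam * x) + Real.exp (-(lam * x))) := by
        simp only [hg₀def, hgdef]
        rw [mul_assoc, ← mul_add]
        congr 1
        rw [mul_add, ← Real.exp_add, ← Real.exp_add]
        ring_nf
      rw [hx]
      have h2 : Real.exp (lam * x) + Real.exp (-(lam * x))
          ≤ 2 * Real.exp ((lam * x) ^ 2 / 2) := by linarith
      calc Real.exp (-(1 / 2)) * Real.exp (-(lam ^ 2 / 2 * x ^ 2))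
            * (Real.exp (lam * x) + Real.exp (-(lam * x))) / 2
          ≤ Real.exp (-(1 / 2)) * Real.exp (-(lam ^ 2 / 2 * x ^ 2))
            * (2 * Real.exp ((lam * x) ^ 2 / 2)) / 2 := by
            apply div_le_div_of_nonneg_right ?_ (by norm_num) |>.trans_eq rfl
            exact mul_le_mul_of_nonneg_left h2 (by positivity)
        _ = Real.exp (-(1 / 2)) := by
            rw [← Real.exp_add]
            ring_nf
            rw [← Real.exp_add]
            ring_nf
    -- conditional expectation monotone
    have hintavg : Integrable (fun ω => (g₀ (dseq (n + 1) ω) + g₀ (-(dseq (n + 1) ω))) / 2) μ :=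
      (hint1.add hint2).div_const 2
    have hmono : μ[(fun ω => (g₀ (dseq (n + 1) ω) + g₀ (-(dseq (n + 1) ω))) / 2) | ℱ n]
        ≤ᵐ[μ] μ[(fun _ => Real.exp (-(1 / 2))) | ℱ n] :=
      condExp_mono hintavg (integrable_const _) (ae_of_all _ fun ω => hptw _)
    have hconst : μ[(fun _ => Real.exp (-(1 / 2)) : Ω → ℝ) | ℱ n]
        = fun _ => Real.exp (-(1 / 2)) := condExp_const (ℱ.le n) _
    -- now relate g and g₀ :  g = exp(1/2) • g₀
    have hgg₀ : (fun ω => g (dseq (n + 1) ω))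
        = Real.exp (1 / 2) • fun ω => g₀ (dseq (n + 1) ω) := by
      funext ω
      simp only [hg₀def, Pi.smul_apply, smul_eq_mul, ← mul_assoc, ← Real.exp_add]
      norm_num
    rw [hgg₀]
    have hsm2 := condExp_smul (μ := μ) (m := ℱ n) (Real.exp (1 / 2))
      (fun ω => g₀ (dseq (n + 1) ω))
    filter_upwards [hsm2, havg, hmono] with ω h1 h2 h3
    rw [h1]
    simp only [Pi.smul_apply, smul_eq_mul]
    calc Real.exp (1 / 2) * (μ[(fun ω => g₀ (dseq (n + 1) ω)) | ℱ n]) ω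
        ≤ Real.exp (1 / 2) * Real.exp (-(1 / 2)) := by
          refine mul_le_mul_of_nonneg_left ?_ (Real.exp_pos _).le
          rw [h2]
          exact h3.trans_eq (congrFun hconst ω)
      _ = 1 := by rw [← Real.exp_add]; norm_num
  -- supermartingale step
  have hstep : ∀ n, μ[M (n + 1) | ℱ n] ≤ᵐ[μ] M n := by
    intro n
    have hsplit : M (n + 1) = M n * fun ω => g (dseq (n + 1) ω) := by
      funext ω
      simp only [hM, hgdef, Pi.mul_apply]
      rw [← Real.exp_add, Finset.sum_range_succ, Finset.sum_range_succ]
      congr 1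
      ring
    rw [hsplit]
    have hmul := condExp_mul_of_stronglyMeasurable_left (μ := μ) (hmeasM n)
      (hsplit ▸ hintM (n + 1)) (hintg n)
    filter_upwards [hmul, hkey n] with ω h1 h2
    rw [h1, Pi.mul_apply]
    calc M n ω * (μ[(fun ω => g (dseq (n + 1) ω)) | ℱ n]) ω
        ≤ M n ω * 1 := mul_le_mul_of_nonneg_left h2 (hMpos n ω).le
      _ = M n ω := mul_one _
  have hsuper : Supermartingale M ℱ μ := supermartingale_nat hadpM hintM hstep
  refine ⟨hsuper, fun n => ?_⟩
  have hM0 : M 0 = fun _ => (1 : ℝ) := by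
    funext ω; simp [hM]
  have h := hsuper.setIntegral_le (Nat.zero_le n) (MeasurableSet.univ (α := Ω))
  rw [setIntegral_univ, setIntegral_univ, hM0] at h
  simpa using h
end

section
/- Let $X_1, \ldots, X_n$ be independent real random variables with $\mathrm{E}[X_i] = 0$, $|X_i| \leq M$ almost surely, and $\sum_{i=1}^n \mathrm{Var}(X_i) \leq V$. Suppose $\gamma = (1 + \sqrt{37})/3$ and $\alpha = \gamma \sqrt{c}$ where $c > 0$ satisfies $V \leq 2c$ and $M \leq \sqrt{c / \log N}$ for some $N \geq e^{10}$. Then for all $x \geq \alpha \sqrt{\log N}$, $\Pr\left(\left|\sum_{i=1}^n X_i\right| \geq x\right) \leq 2 \exp\left(-\frac{\log N}{\alpha \sqrt{\log N}} x\right)$. -/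
open MeasureTheory ProbabilityTheory Real Finset


lemma exp_quad_neg {y : ℝ} (hy : y ≤ 0) : Real.exp y ≤ 1 + y + y^2/2 := by
  have h : Antitone (fun y : ℝ => 1 + y + y^2/2 - Real.exp y) := by
    apply antitone_of_deriv_nonpos
    · fun_prop
    · intro z
      have h1 : HasDerivAt (fun y : ℝ => 1 + y + y^2/2 - Real.exp y)
          (0 + 1 + (2 * z^1 * 1)/2 - Real.exp z) z := by
        exact ((((hasDerivAt_const z (1:ℝ)).add (hasDerivAt_id' (𝕜 := ℝ) (x := z))).add
          (((hasDerivAt_id' (𝕜 := ℝ) (x := z)).pow 2).div_const 2)).sub (Real.hasDerivAt_exp z))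
      rw [h1.deriv]
      have := Real.add_one_le_exp z
      simp only [pow_one]
      linarith
  have h0 := h hy
  simp only [Real.exp_zero] at h0
  nlinarith [h0]

lemma key_G {y : ℝ} (hy : 0 ≤ y) : 0 ≤ y + 2 + (y - 2) * Real.exp y := by
  -- G' y = 1 + (y-1) exp y, G'' = y exp y ≥ 0 on y ≥ 0
  have hG' : MonotoneOn (fun y : ℝ => 1 + (y - 1) * Real.exp y) (Set.Ici 0) := by
    apply monotoneOn_of_deriv_nonneg (convex_Ici 0)
    · fun_prop
    · apply Differentiable.differentiableOn; fun_prop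
    · intro z hz
      rw [interior_Ici] at hz
      have h1 : HasDerivAt (fun y : ℝ => 1 + (y - 1) * Real.exp y)
          (0 + (1 * Real.exp z + (z - 1) * Real.exp z)) z :=
        (hasDerivAt_const z (1:ℝ)).add
          (((hasDerivAt_id' (𝕜 := ℝ) (x := z)).sub_const 1).mul (Real.hasDerivAt_exp z))
      rw [h1.deriv]
      have := Real.exp_pos z
      have : (0:ℝ) < z := hz
      nlinarith [Real.exp_pos z]
  have hG'0 : ∀ z ∈ Set.Ici (0:ℝ), 0 ≤ 1 + (z - 1) * Real.exp z := by
    intro z hz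
    have := hG' (Set.self_mem_Ici) hz hz
    simp only [Real.exp_zero] at this
    linarith
  have hG : MonotoneOn (fun y : ℝ => y + 2 + (y - 2) * Real.exp y) (Set.Ici 0) := by
    apply monotoneOn_of_deriv_nonneg (convex_Ici 0)
    · fun_prop
    · apply Differentiable.differentiableOn; fun_prop
    · intro z hz
      rw [interior_Ici] at hz
      have h1 : HasDerivAt (fun y : ℝ => y + 2 + (y - 2) * Real.exp y)
          (1 + (1 * Real.exp z + (z - 2) * Real.exp z)) z :=
        ((hasDerivAt_id' (𝕜 := ℝ) (x := z)).add_const 2).add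
          (((hasDerivAt_id' (𝕜 := ℝ) (x := z)).sub_const 2).mul (Real.hasDerivAt_exp z))
      rw [h1.deriv]
      have := hG'0 z (show (0:ℝ) ≤ z from le_of_lt hz)
      nlinarith [Real.exp_pos z]
  have := hG (Set.self_mem_Ici) hy hy
  simp only [Real.exp_zero] at this
  linarith

lemma exp_quad_pos {y : ℝ} (hy : 0 ≤ y) :
    (Real.exp y - 1 - y) * (1 - y/3) ≤ y^2/2 := by
  have hF : MonotoneOn (fun y : ℝ => y^2/2 - (Real.exp y - 1 - y) * (1 - y/3)) (Set.Ici 0) := by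
    apply monotoneOn_of_deriv_nonneg (convex_Ici 0)
    · fun_prop
    · apply Differentiable.differentiableOn; fun_prop
    · intro z hz
      rw [interior_Ici] at hz
      have h1 : HasDerivAt (fun y : ℝ => y^2/2 - (Real.exp y - 1 - y) * (1 - y/3))
          ((2 * z^1 * 1)/2 - ((Real.exp z - 1) * (1 - z/3) +
            (Real.exp z - 1 - z) * (0 - 1/3))) z := by
        refine HasDerivAt.sub (((hasDerivAt_id' (𝕜 := ℝ) (x := z)).pow 2).div_const 2) ?_
        exact (((Real.hasDerivAt_exp z).sub_const 1).sub (hasDerivAt_id' (𝕜 := ℝ) (x := z))).mul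
          ((hasDerivAt_const z (1:ℝ)).sub ((hasDerivAt_id' (𝕜 := ℝ) (x := z)).div_const 3))
      rw [h1.deriv]
      have hG := key_G (le_of_lt hz)
      simp only [pow_one]
      nlinarith
  have := hF (Set.self_mem_Ici) hy hy
  simp only [Real.exp_zero] at this
  nlinarith [this]

lemma exp_pointwise {t M x : ℝ} (ht : 0 ≤ t) (hx : |x| ≤ M) (htM : t * M < 3) :
    Real.exp (t * x) ≤ 1 + t * x + t^2 * x^2 / (2 * (1 - t * M / 3)) := by
  have hM : 0 ≤ M := (abs_nonneg x).trans hx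
  have hden : 0 < 1 - t * M / 3 := by nlinarith
  rcases le_or_gt (t * x) 0 with h | h
  · have := exp_quad_neg h
    have h2 : (t*x)^2 / 2 ≤ t^2 * x^2 / (2 * (1 - t * M / 3)) := by
      rw [div_le_div_iff₀ (by norm_num) (by positivity)]
      nlinarith [mul_nonneg (sq_nonneg (t*x)) (mul_nonneg ht hM), sq_nonneg (t*x)]
    nlinarith [h2]
  · have hy := exp_quad_pos h.le
    have htx : t * x ≤ t * M := by
      have : x ≤ M := (le_abs_self x).trans hx
      exact mul_le_mul_of_nonneg_left this ht
    have hden2 : 0 < 1 - t * x / 3 := by nlinarith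
    have key : Real.exp (t*x) - 1 - t*x ≤ (t*x)^2 / (2 * (1 - t*M/3)) := by
      have h1 : Real.exp (t*x) - 1 - t*x ≤ (t*x)^2/2 / (1 - t*x/3) := by
        rw [le_div_iff₀ hden2]; linarith [hy]
      refine h1.trans ?_
      rw [div_le_div_iff₀ hden2 (by positivity)]
      have hnn : 0 ≤ Real.exp (t*x) - 1 - t*x := by nlinarith [Real.add_one_le_exp (t*x)]
      nlinarith [sq_nonneg (t*x)]
    have : (t*x)^2 = t^2 * x^2 := by ring
    linarith [key, this ▸ key]

lemma mgf_single {Ω : Type*} [MeasurableSpace Ω] (μ : Measure Ω) [IsProbabilityMeasure μ]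
    {X : Ω → ℝ} (hX : Measurable X) (hL2 : MemLp X 2 μ) (hmean : ∫ ω, X ω ∂μ = 0)
    {M t : ℝ} (hbdd : ∀ᵐ ω ∂μ, |X ω| ≤ M) (ht : 0 ≤ t) (htM : t * M < 3) :
    mgf X μ t ≤ Real.exp (t^2 * variance X μ / (2 * (1 - t * M / 3))) := by
  have hMnn : 0 ≤ M := by
    obtain ⟨ω, hω⟩ := hbdd.exists
    exact (abs_nonneg _).trans hω
  have hden : 0 < 1 - t * M / 3 := by nlinarith
  have hint1 : Integrable X μ := hL2.integrable one_le_two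
  have hint2 : Integrable (fun ω => X ω ^ 2) μ := hL2.integrable_sq
  have hA : Integrable (fun ω => 1 + t * X ω) μ := (integrable_const 1).add (hint1.const_mul t)
  have hB : Integrable (fun ω => t^2 * X ω^2 / (2 * (1 - t * M / 3))) μ :=
    (hint2.const_mul (t^2 / (2 * (1 - t * M / 3)))).congr (Filter.Eventually.of_forall fun ω => by ring)
  have hintR : Integrable (fun ω => 1 + t * X ω + t^2 * X ω^2 / (2 * (1 - t * M / 3))) μ :=
    hA.add hB
  have hintL : Integrable (fun ω => Real.exp (t * X ω)) μ := by
    refine Integrable.mono' (integrable_const (Real.exp (t * M))) ?_ ?_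
    · exact ((hX.const_mul t).exp).aestronglyMeasurable
    · filter_upwards [hbdd] with ω hω
      rw [Real.norm_eq_abs, abs_of_pos (Real.exp_pos _), Real.exp_le_exp]
      exact mul_le_mul_of_nonneg_left ((le_abs_self _).trans hω) ht
  have hmono : mgf X μ t ≤ ∫ ω, (1 + t * X ω + t^2 * X ω^2 / (2 * (1 - t * M / 3))) ∂μ := by
    refine integral_mono_ae hintL hintR ?_
    filter_upwards [hbdd] with ω hω
    exact exp_pointwise ht hω htM
  have hRHS : ∫ ω, (1 + t * X ω + t^2 * X ω^2 / (2 * (1 - t * M / 3))) ∂μ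
      = 1 + t^2 * variance X μ / (2 * (1 - t * M / 3)) := by
    rw [integral_add hA hB, integral_add (integrable_const 1) (hint1.const_mul t)]
    simp only [integral_const, measure_univ, probReal_univ, ENNReal.toReal_one, smul_eq_mul, one_mul]
    rw [integral_const_mul t, hmean, mul_zero]
    have hm0 : μ[X] = 0 := hmean
    have hv : variance X μ = ∫ ω, X ω ^ 2 ∂μ := by
      rw [variance_eq_sub hL2, hm0]
      norm_num
    rw [hv]
    rw [show (fun ω => t^2 * X ω^2 / (2 * (1 - t * M / 3)))
        = (fun ω => (t^2 / (2 * (1 - t * M / 3))) * X ω^2) by funext ω; ring,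
      integral_const_mul]
    ring
  calc mgf X μ t ≤ 1 + t^2 * variance X μ / (2 * (1 - t * M / 3)) := hRHS ▸ hmono
    _ ≤ Real.exp (t^2 * variance X μ / (2 * (1 - t * M / 3))) := by
        linarith [Real.add_one_le_exp (t^2 * variance X μ / (2 * (1 - t * M / 3)))]

lemma bernstein_sum {Ω : Type*} [MeasurableSpace Ω] (μ : Measure Ω) [IsProbabilityMeasure μ]
    (n : ℕ) (X : Fin n → Ω → ℝ)
    (hmeas : ∀ i, Measurable (X i))
    (hindep : iIndepFun X μ)
    (hL2 : ∀ i, MemLp (X i) 2 μ)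
    (hmean : ∀ i, ∫ ω, X i ω ∂μ = 0)
    {M : ℝ} (hbdd : ∀ i, ∀ᵐ ω ∂μ, |X i ω| ≤ M)
    {t x : ℝ} (ht : 0 ≤ t) (htM : t * M < 3) (hM : 0 ≤ M) :
    (μ {ω | x ≤ ∑ i, X i ω}).toReal ≤
      Real.exp (-t * x + t^2 * (∑ i, variance (X i) μ) / (2 * (1 - t * M / 3))) := by
  have hint : ∀ i ∈ Finset.univ, Integrable (fun ω => Real.exp (t * X i ω)) μ := by
    intro i _
    refine Integrable.mono' (integrable_const (Real.exp (t * M))) ?_ ?_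
    · exact (((hmeas i).const_mul t).exp).aestronglyMeasurable
    · filter_upwards [hbdd i] with ω hω
      rw [Real.norm_eq_abs, abs_of_pos (Real.exp_pos _), Real.exp_le_exp]
      exact mul_le_mul_of_nonneg_left ((le_abs_self _).trans hω) ht
  have h := measure_ge_le_exp_mul_mgf (μ := μ) (X := ∑ i, X i) x ht
      (hindep.integrable_exp_mul_sum hmeas hint)
  simp only [Finset.sum_apply] at h
  refine h.trans ?_
  have hden : 0 < 1 - t * M / 3 := by nlinarith
  have hmgf : mgf (∑ i, X i) μ t
      ≤ Real.exp (t^2 * (∑ i, variance (X i) μ) / (2 * (1 - t * M / 3))) := by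
    rw [hindep.mgf_sum hmeas]
    calc ∏ i, mgf (X i) μ t
        ≤ ∏ i, Real.exp (t^2 * variance (X i) μ / (2 * (1 - t * M / 3))) := by
          refine Finset.prod_le_prod (fun i _ => mgf_nonneg) (fun i _ => ?_)
          exact mgf_single μ (hmeas i) (hL2 i) (hmean i) (hbdd i) ht htM
      _ = Real.exp (∑ i, t^2 * variance (X i) μ / (2 * (1 - t * M / 3))) :=
          (Real.exp_sum _ _).symm
      _ = Real.exp (t^2 * (∑ i, variance (X i) μ) / (2 * (1 - t * M / 3))) := by
          rw [← Finset.sum_div, ← Finset.mul_sum]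
  calc Real.exp (-t * x) * mgf (∑ i, X i) μ t
      ≤ Real.exp (-t * x) * Real.exp (t^2 * (∑ i, variance (X i) μ) / (2 * (1 - t * M / 3))) :=
        mul_le_mul_of_nonneg_left hmgf (Real.exp_pos _).le
    _ = _ := by rw [← Real.exp_add]

/-- A consequence of Bernstein's inequality used to bound the maximum of self-normalized
block sums. -/
theorem bernstein_consequence
    {Ω : Type*} [MeasurableSpace Ω] (μ : Measure Ω) [IsProbabilityMeasure μ]
    (n : ℕ) (X : Fin n → Ω → ℝ)
    (hmeas : ∀ i, Measurable (X i))
    (hindep : iIndepFun X μ)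
    (hL2 : ∀ i, MemLp (X i) 2 μ)
    (hmean : ∀ i, ∫ ω, X i ω ∂μ = 0)
    (M : ℝ) (hbdd : ∀ i, ∀ᵐ ω ∂μ, |X i ω| ≤ M)
    (V : ℝ) (hvar : ∑ i, variance (X i) μ ≤ V)
    (γ α c N : ℝ) (hγ : γ = (1 + Real.sqrt 37) / 3) (hc : 0 < c)
    (hα : α = γ * Real.sqrt c)
    (hVc : V ≤ 2 * c) (hM : M ≤ Real.sqrt (c / Real.log N))
    (hN : Real.exp 10 ≤ N) :
    ∀ x : ℝ, α * Real.sqrt (Real.log N) ≤ x →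
      μ {ω | x ≤ |∑ i, X i ω|}
        ≤ ENNReal.ofReal (2 * Real.exp (-(Real.log N / (α * Real.sqrt (Real.log N))) * x)) := by
  intro x hx
  -- basic numeric setup
  have hN0 : (0:ℝ) < N := lt_of_lt_of_le (Real.exp_pos 10) hN
  set L := Real.log N with hLdef
  have hL10 : (10:ℝ) ≤ L := by
    rw [hLdef, ← Real.log_exp 10]
    exact Real.log_le_log (Real.exp_pos 10) hN
  have hL : (0:ℝ) < L := by linarith
  set r := Real.sqrt L with hrdef
  set s := Real.sqrt c with hsdef
  have hr : 0 < r := Real.sqrt_pos.2 hL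
  have hs : 0 < s := Real.sqrt_pos.2 hc
  have hrr : r * r = L := Real.mul_self_sqrt hL.le
  have hss : s * s = c := Real.mul_self_sqrt hc.le
  set g := Real.sqrt 37 with hgdef
  have hgg : g * g = 37 := Real.mul_self_sqrt (by norm_num)
  have hg1 : 1 < g := by nlinarith [Real.sqrt_nonneg 37]
  have hγpos : 0 < γ := by rw [hγ]; linarith
  have hγ23 : 2/3 < γ := by rw [hγ]; linarith
  have hαr : 0 < α * r := by rw [hα]; positivity
  have hxpos : 0 < x := lt_of_lt_of_le hαr hx
  have hx' : γ * s * r ≤ x := by rw [hα] at hx; exact hx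
  -- exponent coefficient
  have hcoef : L / (α * r) = r / (γ * s) := by
    rw [hα, ← hrr]
    field_simp
  rcases Nat.eq_zero_or_pos n with hn | hn
  · subst hn
    have : {ω : Ω | x ≤ |∑ i : Fin 0, X i ω|} = ∅ := by
      ext ω; simp only [Set.mem_setOf_eq, Set.mem_empty_iff_false, iff_false, not_le]
      simpa using hxpos
    rw [this, measure_empty]
    exact zero_le
  have hMnn : 0 ≤ M := by
    obtain ⟨ω, hω⟩ := (hbdd ⟨0, hn⟩).exists
    exact (abs_nonneg _).trans hω
  have hMr : M * r ≤ s := by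
    have h1 : Real.sqrt (c / L) = s / r := by rw [Real.sqrt_div hc.le]
    have h2 : M ≤ s / r := h1 ▸ hM
    calc M * r ≤ (s / r) * r := mul_le_mul_of_nonneg_right h2 hr.le
      _ = s := by field_simp
  -- choose t
  obtain ⟨D, hDdef⟩ : ∃ D : ℝ, D = 2 * c + M * x / 3 := ⟨_, rfl⟩
  have hD : 0 < D := by rw [hDdef]; positivity
  obtain ⟨t, htdef⟩ : ∃ t : ℝ, t = x / D := ⟨_, rfl⟩
  have ht : 0 ≤ t := by rw [htdef]; positivity
  have htM : t * M < 3 := by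
    rw [htdef, div_mul_eq_mul_div, div_lt_iff₀ hD]
    nlinarith [hDdef]
  have hden : 1 - t * M / 3 = 2 * c / D := by
    rw [htdef, hDdef]
    field_simp
    ring
  have hvar2 : ∑ i, variance (X i) μ ≤ 2 * c := hvar.trans hVc
  have hvnn : 0 ≤ ∑ i, variance (X i) μ :=
    Finset.sum_nonneg fun i _ => variance_nonneg _ _
  -- exponent bound
  have hexp : -t * x + t^2 * (∑ i, variance (X i) μ) / (2 * (1 - t * M / 3))
      ≤ -(L / (α * r)) * x := by
    have h1 : t^2 * (∑ i, variance (X i) μ) / (2 * (1 - t * M / 3)) ≤ t * x / 2 := by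
      rw [hden, htdef]
      rw [div_le_div_iff₀ (by positivity) (by norm_num)]
      have e1 : (x/D)^2 = x^2 / D^2 := by rw [div_pow]
      rw [e1]
      have key : x^2 / D^2 * (∑ i, variance (X i) μ) ≤ x^2 / D^2 * (2*c) :=
        mul_le_mul_of_nonneg_left hvar2 (by positivity)
      calc x^2 / D^2 * (∑ i, variance (X i) μ) * 2 ≤ x^2/D^2 * (2*c) * 2 := by linarith
        _ = x / D * x * (2 * (2 * c / D)) := by field_simp
    have hgoal : 2 * D * r ≤ γ * s * x := by
      have hb1 : M * x * r ≤ s * x := by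
        calc M * x * r = (M * r) * x := by ring
          _ ≤ s * x := mul_le_mul_of_nonneg_right hMr hxpos.le
      have hb2 : (γ - 2/3) * (γ * s * r) ≤ (γ - 2/3) * x :=
        mul_le_mul_of_nonneg_left hx' (by linarith)
      have hid : (γ - 2/3) * γ = 4 := by
        rw [hγ]; linear_combination hgg / 9
      have h4sr : 4 * (s * r) ≤ (γ - 2/3) * x := by
        calc 4 * (s * r) = ((γ - 2/3) * γ) * (s * r) := by rw [hid]
          _ = (γ - 2/3) * (γ * s * r) := by ring
          _ ≤ (γ - 2/3) * x := hb2
      have hssr : s * (4 * (s * r)) ≤ s * ((γ - 2/3) * x) :=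
        mul_le_mul_of_nonneg_left h4sr hs.le
      have hDr : D * r = 2*c*r + M*x*r/3 := by rw [hDdef]; ring
      have hcr : c * r = s * (s * r) := by rw [← hss]; ring
      linarith [hb1, hssr, hDr, hcr]
    have h2 : (L / (α * r)) * x ≤ t * x / 2 := by
      rw [hcoef, htdef]
      have e : x / D * x / 2 = x^2 / (2*D) := by field_simp
      rw [e, div_mul_eq_mul_div, div_le_div_iff₀ (by positivity) (by positivity)]
      linarith [mul_le_mul_of_nonneg_right hgoal hxpos.le]
    linarith [h1, h2]
  -- apply Bernstein to X and -X
  have hA1 := bernstein_sum μ n X hmeas hindep hL2 hmean hbdd (x := x) ht htM hMnn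
  have hmeasY : ∀ i, Measurable (fun ω => -X i ω) := fun i => (hmeas i).neg
  have hindepY : iIndepFun (fun i => fun ω => -X i ω) μ :=
    hindep.comp (fun _ => fun a : ℝ => -a) (fun _ => measurable_neg)
  have hL2Y : ∀ i, MemLp (fun ω => -X i ω) 2 μ := fun i => (hL2 i).neg
  have hmeanY : ∀ i, ∫ ω, -X i ω ∂μ = 0 := fun i => by
    rw [integral_neg, hmean i, neg_zero]
  have hbddY : ∀ i, ∀ᵐ ω ∂μ, |(-X i ω)| ≤ M := fun i => by
    filter_upwards [hbdd i] with ω hω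
    rwa [abs_neg]
  have hA2 := bernstein_sum μ n (fun i => fun ω => -X i ω) hmeasY hindepY hL2Y hmeanY hbddY
    (x := x) ht htM hMnn
  have hvarY : ∑ i, variance (fun ω => -X i ω) μ = ∑ i, variance (X i) μ := by
    refine Finset.sum_congr rfl fun i _ => ?_
    rw [show (fun ω => -X i ω) = (-1 : ℝ) • (X i) from funext fun ω => by simp,
      variance_smul]
    norm_num
  rw [hvarY] at hA2
  have hsetY : {ω | x ≤ ∑ i, -X i ω} = {ω | x ≤ -∑ i, X i ω} := by
    ext ω; simp [Finset.sum_neg_distrib]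
  rw [hsetY] at hA2
  -- combine
  set E := Real.exp (-t * x + t^2 * (∑ i, variance (X i) μ) / (2 * (1 - t * M / 3))) with hEdef
  have hsub : {ω : Ω | x ≤ |∑ i, X i ω|} ⊆
      {ω | x ≤ ∑ i, X i ω} ∪ {ω | x ≤ -∑ i, X i ω} := by
    intro ω hω
    have hω' : x ≤ |∑ i, X i ω| := hω
    rcases le_abs.1 hω' with h | h
    · exact Or.inl h
    · exact Or.inr h
  have hmeasure : μ {ω : Ω | x ≤ |∑ i, X i ω|}
      ≤ μ {ω | x ≤ ∑ i, X i ω} + μ {ω | x ≤ -∑ i, X i ω} :=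
    (measure_mono hsub).trans (measure_union_le _ _)
  have hfin1 : μ {ω | x ≤ ∑ i, X i ω} = ENNReal.ofReal (μ {ω | x ≤ ∑ i, X i ω}).toReal :=
    (ENNReal.ofReal_toReal (measure_ne_top μ _)).symm
  have hfin2 : μ {ω | x ≤ -∑ i, X i ω} = ENNReal.ofReal (μ {ω | x ≤ -∑ i, X i ω}).toReal :=
    (ENNReal.ofReal_toReal (measure_ne_top μ _)).symm
  calc μ {ω : Ω | x ≤ |∑ i, X i ω|}
      ≤ μ {ω | x ≤ ∑ i, X i ω} + μ {ω | x ≤ -∑ i, X i ω} := hmeasure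
    _ ≤ ENNReal.ofReal E + ENNReal.ofReal E := by
        rw [hfin1, hfin2]
        exact add_le_add (ENNReal.ofReal_le_ofReal hA1) (ENNReal.ofReal_le_ofReal hA2)
    _ = ENNReal.ofReal (2 * E) := by
        rw [← ENNReal.ofReal_add (by positivity) (by positivity)]
        ring_nf
    _ ≤ ENNReal.ofReal (2 * Real.exp (-(L / (α * r)) * x)) := by
        refine ENNReal.ofReal_le_ofReal ?_
        have : E ≤ Real.exp (-(L / (α * r)) * x) := by
          rw [hEdef]
          exact Real.exp_le_exp.2 hexp
        linarith [this]
end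

section
/- Let $B$ and $\xi$ be random variables with $B \geq 0$, $\mathrm{E}[B^2] > 0$, and suppose $\mathrm{E}\left[\frac{\sqrt{\mathrm{E}[B^2]}}{\sqrt{B^2 + \mathrm{E}[B^2]}} \exp(2\xi^2)\right] \leq N$ for some $N \geq 1$. Then $\mathrm{E}[\exp(\xi^2)] \leq 2^{1/4} \sqrt{N}$. -/
open MeasureTheory Real

set_option maxHeartbeats 1000000 in
/-- Cauchy–Schwarz step: from a weighted exponential moment bound for `exp (2 ξ²)`
to a bound on `E[exp ξ²]`. -/
theorem weighted_exp_moment_to_exp_moment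
    {Ω : Type*} [MeasurableSpace Ω] (μ : Measure Ω) [IsProbabilityMeasure μ]
    (B ξ : Ω → ℝ) (hBnn : ∀ ω, 0 ≤ B ω)
    (hB2 : Integrable (fun ω => (B ω) ^ 2) μ)
    (hpos : 0 < ∫ ω, (B ω) ^ 2 ∂μ)
    (N : ℝ) (hN : 1 ≤ N)
    (h : ∫⁻ ω, ENNReal.ofReal
        (Real.sqrt (∫ ω', (B ω') ^ 2 ∂μ)
          / Real.sqrt ((B ω) ^ 2 + ∫ ω', (B ω') ^ 2 ∂μ)
          * Real.exp (2 * (ξ ω) ^ 2)) ∂μ ≤ ENNReal.ofReal N) :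
    ∫⁻ ω, ENNReal.ofReal (Real.exp ((ξ ω) ^ 2)) ∂μ
      ≤ ENNReal.ofReal ((2 : ℝ) ^ ((1 : ℝ) / 4) * Real.sqrt N) := by
  set m : ℝ := ∫ ω', (B ω') ^ 2 ∂μ with hm
  have hm0 : 0 < m := hpos
  have hN0 : (0:ℝ) < N := lt_of_lt_of_le one_pos hN
  set c : ℝ := Real.sqrt N / (2:ℝ) ^ ((1:ℝ)/4) with hc
  have hc0 : 0 < c := by positivity
  have hs2 : (0:ℝ) < Real.sqrt 2 := by positivity
  -- real-valued second factor
  set r : Ω → ℝ := fun ω => c / 2 * (((B ω) ^ 2 / m + 3) / (2 * Real.sqrt 2)) with hr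
  -- pointwise key inequality
  have key : ∀ ω, Real.exp ((ξ ω) ^ 2) ≤
      1 / (2 * c) * (Real.sqrt m / Real.sqrt ((B ω) ^ 2 + m) * Real.exp (2 * (ξ ω) ^ 2))
      + r ω := by
    intro ω
    set u : ℝ := Real.exp ((ξ ω) ^ 2) with hu
    have hu0 : 0 < u := Real.exp_pos _
    have hu2 : Real.exp (2 * (ξ ω) ^ 2) = u ^ 2 := by
      rw [hu, ← Real.exp_nat_mul]; ring_nf
    have hBm : (0:ℝ) < (B ω) ^ 2 + m := by positivity
    set a : ℝ := Real.sqrt m with ha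
    set b : ℝ := Real.sqrt ((B ω) ^ 2 + m) with hb
    have ha0 : 0 < a := Real.sqrt_pos.mpr hm0
    have hb0 : 0 < b := Real.sqrt_pos.mpr hBm
    have ha2 : a ^ 2 = m := Real.sq_sqrt hm0.le
    have hb2 : b ^ 2 = (B ω) ^ 2 + m := Real.sq_sqrt hBm.le
    have hs22 : Real.sqrt 2 ^ 2 = 2 := Real.sq_sqrt (by norm_num)
    -- step 1: u ≤ 1/(2c) * (a/b * u^2) + c/2 * (b/a)
    set v : ℝ := a / b with hv
    have hv0 : 0 < v := div_pos ha0 hb0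
    have step1 : u ≤ 1 / (2 * c) * (a / b * u ^ 2) + c / 2 * (b / a) := by
      rw [show b / a = 1 / v from by rw [hv, one_div_div], ← hv]
      have hrw : 1 / (2 * c) * (v * u ^ 2) + c / 2 * (1 / v)
          = (v ^ 2 * u ^ 2 + c ^ 2) / (2 * c * v) := by
        field_simp
      rw [hrw, le_div_iff₀ (by positivity)]
      nlinarith [sq_nonneg (v * u - c)]
    -- step 2: b/a ≤ ((B ω)^2/m + 3)/(2 √2)
    have hBb : (B ω) ^ 2 = b ^ 2 - a ^ 2 := by rw [hb2, ha2]; ring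
    have step2 : b / a ≤ ((B ω) ^ 2 / m + 3) / (2 * Real.sqrt 2) := by
      rw [div_le_div_iff₀ ha0 (by positivity), hBb, ← ha2]
      have hrw : ((b ^ 2 - a ^ 2) / a ^ 2 + 3) * a = (b ^ 2 + 2 * a ^ 2) / a := by
        field_simp; ring
      rw [hrw, le_div_iff₀ ha0]
      nlinarith [sq_nonneg (b - Real.sqrt 2 * a), hs22, mul_pos ha0 hb0, mul_pos hs2 ha0]
    calc u ≤ 1 / (2 * c) * (a / b * u ^ 2) + c / 2 * (b / a) := step1
      _ ≤ 1 / (2 * c) * (a / b * u ^ 2) + c / 2 * (((B ω) ^ 2 / m + 3) / (2 * Real.sqrt 2)) := by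
          gcongr
      _ = _ := by rw [hu2, hr]
  -- integrability of r
  have hrint : Integrable r μ := by
    apply Integrable.const_mul
    apply Integrable.div_const
    exact (hB2.div_const m).add (integrable_const 3)
  have hrnn : ∀ ω, 0 ≤ r ω := by
    intro ω
    have := hBnn ω
    have hb2 : (0:ℝ) ≤ (B ω)^2 / m := by positivity
    positivity
  -- value of ∫ r
  have hrval : ∫ ω, r ω ∂μ = c / 2 * Real.sqrt 2 := by
    rw [hr]
    rw [integral_const_mul, integral_div]
    rw [integral_add (hB2.div_const m) (integrable_const 3)]
    rw [integral_div, integral_const]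
    simp only [measure_univ, probReal_univ, ENNReal.toReal_one, smul_eq_mul, one_mul]
    rw [← hm, div_self hm0.ne']
    have : (1 + 3 : ℝ) / (2 * Real.sqrt 2) = Real.sqrt 2 := by
      rw [div_eq_iff (by positivity)]
      nlinarith [Real.sq_sqrt (by norm_num : (0:ℝ) ≤ 2)]
    rw [this]
  -- main chain
  calc ∫⁻ ω, ENNReal.ofReal (Real.exp ((ξ ω) ^ 2)) ∂μ
      ≤ ∫⁻ ω, (ENNReal.ofReal (1 / (2 * c) *
          (Real.sqrt m / Real.sqrt ((B ω) ^ 2 + m) * Real.exp (2 * (ξ ω) ^ 2)))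
          + ENNReal.ofReal (r ω)) ∂μ := by
        apply lintegral_mono
        intro ω
        calc ENNReal.ofReal (Real.exp ((ξ ω) ^ 2))
            ≤ ENNReal.ofReal (1 / (2 * c) *
              (Real.sqrt m / Real.sqrt ((B ω) ^ 2 + m) * Real.exp (2 * (ξ ω) ^ 2)) + r ω) :=
              ENNReal.ofReal_le_ofReal (key ω)
          _ ≤ _ := ENNReal.ofReal_add_le
    _ = (∫⁻ ω, ENNReal.ofReal (1 / (2 * c) *
          (Real.sqrt m / Real.sqrt ((B ω) ^ 2 + m) * Real.exp (2 * (ξ ω) ^ 2))) ∂μ)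
        + ∫⁻ ω, ENNReal.ofReal (r ω) ∂μ := by
        apply lintegral_add_right'
        apply ENNReal.measurable_ofReal.comp_aemeasurable
        apply AEMeasurable.const_mul
        apply AEMeasurable.div_const
        exact (hB2.aestronglyMeasurable.aemeasurable.div_const m).add aemeasurable_const
    _ ≤ ENNReal.ofReal (1 / (2 * c)) * ENNReal.ofReal N + ENNReal.ofReal (c / 2 * Real.sqrt 2) := by
        gcongr
        · -- first term
          have heq : ∀ ω, ENNReal.ofReal (1 / (2 * c) *
              (Real.sqrt m / Real.sqrt ((B ω) ^ 2 + m) * Real.exp (2 * (ξ ω) ^ 2)))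
              = ENNReal.ofReal (1 / (2 * c)) * ENNReal.ofReal
              (Real.sqrt m / Real.sqrt ((B ω) ^ 2 + m) * Real.exp (2 * (ξ ω) ^ 2)) := by
            intro ω; rw [ENNReal.ofReal_mul (by positivity)]
          simp only [heq]
          rw [lintegral_const_mul' _ _ ENNReal.ofReal_ne_top]
          exact mul_le_mul_right h _
        · -- second term
          rw [← hrval, ← ofReal_integral_eq_lintegral_ofReal hrint
            (Filter.Eventually.of_forall hrnn)]
    _ = ENNReal.ofReal (1 / (2 * c) * N + c / 2 * Real.sqrt 2) := by
        rw [← ENNReal.ofReal_mul (by positivity), ENNReal.ofReal_add (by positivity) (by positivity)]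
    _ = ENNReal.ofReal ((2 : ℝ) ^ ((1 : ℝ) / 4) * Real.sqrt N) := by
        congr 1
        have h14 : ((2:ℝ) ^ ((1:ℝ)/4)) ^ 2 = Real.sqrt 2 := by
          rw [← Real.rpow_natCast ((2:ℝ) ^ ((1:ℝ)/4)) 2, ← Real.rpow_mul (by norm_num)]
          rw [Real.sqrt_eq_rpow]
          norm_num
        have hsN : Real.sqrt N ^ 2 = N := Real.sq_sqrt hN0.le
        have h140 : (0:ℝ) < (2:ℝ) ^ ((1:ℝ)/4) := by positivity
        have hsN0 : (0:ℝ) < Real.sqrt N := Real.sqrt_pos.mpr hN0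
        rw [hc]
        field_simp
        nlinarith [h14, hsN, mul_pos h140 hsN0, sq_nonneg ((2:ℝ)^((1:ℝ)/4))]
end

section
/- Let $\{d_i\}_{i=1}^n$ be a martingale difference sequence with respect to a filtration $\{\mathcal{F}_i\}$ with $\mathrm{E}[d_i^2] < \infty$ for all $i$. Then for all $\lambda \in \mathbb{R}$, $\mathrm{E}\left[\exp\left(\lambda \sum_{i=1}^{n} d_i - \frac{\lambda^2}{2}\left(\sum_{i=1}^{n} d_i^2 + \sum_{i=1}^{n} \mathrm{E}[d_i^2 \mid \mathcal{F}_{i-1}]\right)\right)\right] \leq 1$. -/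
open MeasureTheory Finset

/-- Elementary pointwise inequality: `exp (x - x²/2) ≤ 1 + x + x²/2`. -/
lemma mds_key_exp_ineq (x : ℝ) : Real.exp (x - x ^ 2 / 2) ≤ 1 + x + x ^ 2 / 2 := by
  set y := x - x ^ 2 / 2 with hy
  have h1 : (0:ℝ) < 1 - y := by rw [hy]; nlinarith [sq_nonneg (x - 1)]
  have h2 : (1 - y) * Real.exp y ≤ 1 := by
    have h := Real.add_one_le_exp (-y)
    have h' := mul_le_mul_of_nonneg_right h (Real.exp_pos y).le
    rw [← Real.exp_add, neg_add_cancel, Real.exp_zero] at h'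
    nlinarith [h']
  have h3 : (1:ℝ) ≤ (1 + x + x ^ 2 / 2) * (1 - y) := by rw [hy]; nlinarith [sq_nonneg (x ^ 2)]
  have h4 : Real.exp y * (1 - y) ≤ (1 + x + x ^ 2 / 2) * (1 - y) := by
    rw [mul_comm]; exact h2.trans h3
  exact le_of_mul_le_mul_right h4 h1

/-- The inductive core: the expected value of the self-normalized exponential is at most 1. -/
lemma mds_aux
    {Ω : Type*} {m0 : MeasurableSpace Ω} (μ : Measure Ω) [IsProbabilityMeasure μ]
    (ℱ : Filtration ℕ m0) (dseq : ℕ → Ω → ℝ)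
    (hadp : Adapted ℱ dseq)
    (hL2 : ∀ i, MemLp (dseq i) 2 μ)
    (hmds : ∀ i : ℕ, 1 ≤ i → μ[dseq i | ℱ (i - 1)] =ᵐ[μ] 0)
    (lam : ℝ) :
    ∀ N : ℕ, ∫ ω, Real.exp (∑ i ∈ Finset.Icc 1 N,
        (lam * dseq i ω - lam ^ 2 / 2 * (dseq i ω) ^ 2
          - lam ^ 2 / 2 * (μ[fun ω' => (dseq i ω') ^ 2 | ℱ (i - 1)]) ω)) ∂μ ≤ 1 := by
  set c : ℕ → Ω → ℝ := fun i => μ[fun ω' => (dseq i ω') ^ 2 | ℱ (i - 1)] with hc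
  set S : ℕ → Ω → ℝ := fun N ω => ∑ i ∈ Finset.Icc 1 N,
      (lam * dseq i ω - lam ^ 2 / 2 * (dseq i ω) ^ 2 - lam ^ 2 / 2 * c i ω) with hS
  -- basic facts
  have hd_meas : ∀ i, StronglyMeasurable[m0] (dseq i) := fun i => ((hadp i).mono (ℱ.le i) le_rfl).stronglyMeasurable
  have hc_meas : ∀ i, StronglyMeasurable[ℱ (i - 1)] (c i) := fun i => stronglyMeasurable_condExp
  have hc_nonneg : ∀ i, 0 ≤ᵐ[μ] c i := fun i =>
    condExp_nonneg (Filter.Eventually.of_forall fun ω => sq_nonneg _)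
  have hc_nonneg_all : ∀ᵐ ω ∂μ, ∀ i, 0 ≤ c i ω := ae_all_iff.2 hc_nonneg
  have hS_meas : ∀ N, StronglyMeasurable[ℱ N] (S N) := by
    intro N
    apply Finset.stronglyMeasurable_fun_sum
    intro i hi
    rw [Finset.mem_Icc] at hi
    have hdi : StronglyMeasurable[ℱ N] (dseq i) := ((hadp i).mono (ℱ.mono hi.2) le_rfl).stronglyMeasurable
    have hci : StronglyMeasurable[ℱ N] (c i) :=
      (hc_meas i).mono (ℱ.mono (le_trans (Nat.sub_le i 1) hi.2))
    exact ((stronglyMeasurable_const.mul hdi).sub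
      (stronglyMeasurable_const.mul (hdi.pow 2))).sub (stronglyMeasurable_const.mul hci)
  have hS_le : ∀ N, ∀ᵐ ω ∂μ, S N ω ≤ N / 2 := by
    intro N
    filter_upwards [hc_nonneg_all] with ω hω
    have hle : S N ω ≤ ∑ _i ∈ Finset.Icc 1 N, (1/2 : ℝ) := by
      apply Finset.sum_le_sum
      intro i _
      have h1 := hω i
      nlinarith [sq_nonneg (lam * dseq i ω - 1), mul_nonneg (by positivity : (0:ℝ) ≤ lam ^ 2 / 2) h1]
    calc S N ω ≤ ∑ _i ∈ Finset.Icc 1 N, (1/2 : ℝ) := hle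
      _ ≤ N / 2 := by
          rw [Finset.sum_const, Nat.card_Icc, nsmul_eq_mul]
          simp only [Nat.add_sub_cancel]
          ring_nf
          norm_num
  have hS_int : ∀ N, Integrable (fun ω => Real.exp (S N ω)) μ := by
    intro N
    refine Integrable.mono' (integrable_const (Real.exp (N / 2)))
      (Real.continuous_exp.comp_stronglyMeasurable
        ((hS_meas N).mono (ℱ.le N))).aestronglyMeasurable ?_
    filter_upwards [hS_le N] with ω hω
    rw [Real.norm_eq_abs, abs_of_pos (Real.exp_pos _)]
    exact Real.exp_le_exp.2 hω
  intro N
  induction N with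
  | zero =>
      have h0 : ∀ ω, Real.exp (S 0 ω) = 1 := by
        intro ω
        simp [hS, Finset.Icc_eq_empty (by omega : ¬ (1:ℕ) ≤ 0)]
      show ∫ ω, Real.exp (S 0 ω) ∂μ ≤ 1
      simp only [h0]
      simp
  | succ N ih =>
      set d : Ω → ℝ := dseq (N + 1) with hd
      set f : Ω → ℝ := fun ω => Real.exp (S N ω - lam ^ 2 / 2 * c (N + 1) ω) with hf
      set g : Ω → ℝ := fun ω => Real.exp (lam * d ω - lam ^ 2 / 2 * (d ω) ^ 2) with hg
      have hsplit : ∀ ω, Real.exp (S (N + 1) ω) = f ω * g ω := by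
        intro ω
        rw [hf, hg, ← Real.exp_add]
        congr 1
        have hins : Finset.Icc 1 (N + 1) = insert (N + 1) (Finset.Icc 1 N) :=
          (Finset.insert_Icc_right_eq_Icc_add_one (by omega)).symm
        rw [hS]
        simp only [hins, Finset.sum_insert (by simp [Finset.mem_Icc] : (N + 1) ∉ Finset.Icc 1 N)]
        ring
      have hfg_eq : f * g = fun ω => Real.exp (S (N + 1) ω) := by
        funext ω; rw [Pi.mul_apply, ← hsplit]
      -- measurability
      have hdN : StronglyMeasurable[ℱ N] (c (N + 1)) := hc_meas (N + 1)
      have hf_meas : StronglyMeasurable[ℱ N] f :=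
        Real.continuous_exp.comp_stronglyMeasurable
          ((hS_meas N).sub (stronglyMeasurable_const.mul hdN))
      have hg_bound : ∀ ω, g ω ≤ Real.exp (1 / 2) := by
        intro ω
        rw [hg]
        apply Real.exp_le_exp.2
        nlinarith [sq_nonneg (lam * d ω - 1)]
      have hg_meas : StronglyMeasurable[m0] g :=
        Real.continuous_exp.comp_stronglyMeasurable
          ((stronglyMeasurable_const.mul (hd_meas (N + 1))).sub
            (stronglyMeasurable_const.mul ((hd_meas (N + 1)).pow 2)))
      have hg_int : Integrable g μ := by
        refine Integrable.mono' (integrable_const (Real.exp (1 / 2)))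
          hg_meas.aestronglyMeasurable (Filter.Eventually.of_forall fun ω => ?_)
        rw [Real.norm_eq_abs, abs_of_pos (Real.exp_pos _)]
        exact hg_bound ω
      have hfg_int : Integrable (f * g) μ := hfg_eq ▸ hS_int (N + 1)
      -- the polynomial dominating function
      have hd_int : Integrable d μ := (hL2 (N + 1)).integrable one_le_two
      have hd2_int : Integrable (fun ω => (d ω) ^ 2) μ := (hL2 (N + 1)).integrable_sq
      set P : Ω → ℝ := fun ω => 1 + lam * d ω + lam ^ 2 / 2 * (d ω) ^ 2 with hP
      have hP_int : Integrable P μ :=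
        ((integrable_const (1:ℝ)).add (hd_int.const_mul lam)).add (hd2_int.const_mul _)
      have h_ptwise : ∀ ω, g ω ≤ P ω := by
        intro ω
        have h := mds_key_exp_ineq (lam * d ω)
        have e1 : lam * d ω - (lam * d ω) ^ 2 / 2 = lam * d ω - lam ^ 2 / 2 * d ω ^ 2 := by ring
        have e2 : (1:ℝ) + lam * d ω + (lam * d ω) ^ 2 / 2
            = 1 + lam * d ω + lam ^ 2 / 2 * d ω ^ 2 := by ring
        rw [e1, e2] at h
        exact h
      have hmds' : μ[d | ℱ N] =ᵐ[μ] 0 := hmds (N + 1) (by omega)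
      -- conditional expectation of P
      have i1 : Integrable (lam • d) μ := hd_int.smul lam
      have i2 : Integrable ((lam ^ 2 / 2) • fun ω => (d ω) ^ 2) μ := hd2_int.smul _
      have hP_eq : P = (fun _ => (1:ℝ)) + ((lam • d) + (lam ^ 2 / 2) • fun ω => (d ω) ^ 2) := by
        funext ω
        simp only [hP, Pi.add_apply, Pi.smul_apply, smul_eq_mul]
        ring
      have hcondP : μ[P | ℱ N] =ᵐ[μ] fun ω => 1 + lam ^ 2 / 2 * c (N + 1) ω := by
        rw [hP_eq]
        have hA := condExp_add (μ := μ) (m := ℱ N) (integrable_const (1:ℝ)) (i1.add i2)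
        have hB := condExp_add (μ := μ) (m := ℱ N) i1 i2
        have hC := condExp_smul (μ := μ) (m := ℱ N) lam d
        have hD := condExp_smul (μ := μ) (m := ℱ N) (lam ^ 2 / 2) (fun ω => (d ω) ^ 2)
        filter_upwards [hA, hB, hC, hD, hmds'] with ω hAω hBω hCω hDω hmω
        rw [hAω, Pi.add_apply, hBω, Pi.add_apply, hCω, hDω]
        rw [condExp_const (ℱ.le N)]
        simp only [Pi.smul_apply, smul_eq_mul]
        rw [hmω]
        simp only [Pi.zero_apply, mul_zero, add_zero]
        simp only [hc, hd, Nat.add_sub_cancel]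
        ring
      have hcond_g : μ[g | ℱ N] ≤ᵐ[μ] fun ω => 1 + lam ^ 2 / 2 * c (N + 1) ω :=
        (condExp_mono hg_int hP_int (Filter.Eventually.of_forall h_ptwise)).trans hcondP.le
      -- main estimate
      have hkey : ∫ ω, Real.exp (S (N + 1) ω) ∂μ ≤ ∫ ω, Real.exp (S N ω) ∂μ := by
        have e1 : ∫ ω, Real.exp (S (N + 1) ω) ∂μ = ∫ ω, (f * g) ω ∂μ := by rw [hfg_eq]
        have e2 : ∫ ω, (f * g) ω ∂μ = ∫ ω, (μ[f * g | ℱ N]) ω ∂μ :=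
          (integral_condExp (ℱ.le N)).symm
        rw [e1, e2]
        refine integral_mono_ae integrable_condExp (hS_int N) ?_
        have hpull := condExp_mul_of_stronglyMeasurable_left hf_meas hfg_int hg_int
        filter_upwards [hpull, hcond_g] with ω h1 h2
        rw [h1, Pi.mul_apply]
        have hf_pos : 0 ≤ f ω := (Real.exp_pos _).le
        calc f ω * (μ[g | ℱ N]) ω ≤ f ω * (1 + lam ^ 2 / 2 * c (N + 1) ω) :=
              mul_le_mul_of_nonneg_left h2 hf_pos
          _ ≤ f ω * Real.exp (lam ^ 2 / 2 * c (N + 1) ω) := by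
              refine mul_le_mul_of_nonneg_left ?_ hf_pos
              linarith [Real.add_one_le_exp (lam ^ 2 / 2 * c (N + 1) ω)]
          _ = Real.exp (S N ω) := by
              rw [hf, ← Real.exp_add]
              congr 1
              ring
      exact hkey.trans ih

/-- Exponential inequality for self-normalized martingale difference sequences
(discrete consequence of the Barlow–Jacka–Yor inequality). -/
theorem mds_self_normalized_exp_bound
    {Ω : Type*} {m0 : MeasurableSpace Ω} (μ : Measure Ω) [IsProbabilityMeasure μ]
    (ℱ : Filtration ℕ m0) (dseq : ℕ → Ω → ℝ)
    (hadp : Adapted ℱ dseq)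
    (hL2 : ∀ i, MemLp (dseq i) 2 μ)
    (hmds : ∀ i : ℕ, 1 ≤ i → μ[dseq i | ℱ (i - 1)] =ᵐ[μ] 0)
    (n : ℕ) (lam : ℝ) :
    ∫ ω, Real.exp (lam * ∑ i ∈ Finset.Icc 1 n, dseq i ω
        - lam ^ 2 / 2 * ((∑ i ∈ Finset.Icc 1 n, (dseq i ω) ^ 2)
          + ∑ i ∈ Finset.Icc 1 n, (μ[fun ω' => (dseq i ω') ^ 2 | ℱ (i - 1)]) ω)) ∂μ
      ≤ 1 := by
  have h := mds_aux μ ℱ dseq hadp hL2 hmds lam n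
  have hrw : ∀ ω, lam * ∑ i ∈ Finset.Icc 1 n, dseq i ω
        - lam ^ 2 / 2 * ((∑ i ∈ Finset.Icc 1 n, (dseq i ω) ^ 2)
          + ∑ i ∈ Finset.Icc 1 n, (μ[fun ω' => (dseq i ω') ^ 2 | ℱ (i - 1)]) ω)
      = ∑ i ∈ Finset.Icc 1 n,
        (lam * dseq i ω - lam ^ 2 / 2 * (dseq i ω) ^ 2
          - lam ^ 2 / 2 * (μ[fun ω' => (dseq i ω') ^ 2 | ℱ (i - 1)]) ω) := by
    intro ω
    rw [Finset.sum_sub_distrib, Finset.sum_sub_distrib, ← Finset.mul_sum, ← Finset.mul_sum,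
      ← Finset.mul_sum]
    ring
  calc ∫ ω, Real.exp (lam * ∑ i ∈ Finset.Icc 1 n, dseq i ω
        - lam ^ 2 / 2 * ((∑ i ∈ Finset.Icc 1 n, (dseq i ω) ^ 2)
          + ∑ i ∈ Finset.Icc 1 n, (μ[fun ω' => (dseq i ω') ^ 2 | ℱ (i - 1)]) ω)) ∂μ
      = ∫ ω, Real.exp (∑ i ∈ Finset.Icc 1 n,
          (lam * dseq i ω - lam ^ 2 / 2 * (dseq i ω) ^ 2
            - lam ^ 2 / 2 * (μ[fun ω' => (dseq i ω') ^ 2 | ℱ (i - 1)]) ω)) ∂μ := by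
        simp only [hrw]
    _ ≤ 1 := h
end
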